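/- The function B : ℝ → ℝ defined by B(d) = -(d - d̂)² · log(d / d̂) for 0 < d < d̂ and B(d) = 0 for d ≥ d̂ is twice continuously differentiable on the open interval (0, ∞) (i.e., B is C² on the set of positive reals; in particular B, its first derivative, and its second derivative all tend to 0 as d → d̂ from the left). -/

import Mathlib

/-- The IPC barrier function `b(d) = -(d - d̂)² · log(d / d̂)` for `0 < d < d̂`,
`b(d) = 0` for `d ≥ d̂`, is twice continuously differentiable on `(0, ∞)`. -/
theorem barrier_contDiffOn (dhat : ℝ) (hdhat : 0 < dhat) (b : ℝ → ℝ)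
    (hb₁ : ∀ d : ℝ, 0 < d → d < dhat → b d = -(d - dhat) ^ 2 * Real.log (d / dhat))
    (hb₂ : ∀ d : ℝ, dhat ≤ d → b d = 0) :
    ContDiffOn ℝ 2 b (Set.Ioi (0 : ℝ)) := by
  set g1 : ℝ → ℝ := fun d => -2 * (d - dhat) * Real.log (d / dhat) - (d - dhat) ^ 2 / d with hg1def
  set g2 : ℝ → ℝ := fun d =>
    -2 * Real.log (d / dhat) - 4 * (d - dhat) / d + (d - dhat) ^ 2 / d ^ 2 with hg2def
  set B1 : ℝ → ℝ := fun d => if d < dhat then g1 d else 0 with hB1def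
  set B2 : ℝ → ℝ := fun d => if d < dhat then g2 d else 0 with hB2def
  -- derivative of log(d/dhat)
  have hlog : ∀ x : ℝ, 0 < x → HasDerivAt (fun d : ℝ => Real.log (d / dhat)) (1 / x) x := by
    intro x hx
    have h1 : HasDerivAt (fun d : ℝ => d / dhat) (1 / dhat) x := by
      simpa using (hasDerivAt_id x).div_const dhat
    have h2 := (Real.hasDerivAt_log (by positivity : x / dhat ≠ 0)).comp x h1
    refine h2.congr_deriv ?_
    field_simp
  have hg : ∀ x : ℝ, 0 < x →
      HasDerivAt (fun d : ℝ => -(d - dhat) ^ 2 * Real.log (d / dhat)) (g1 x) x := by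
    intro x hx
    have h1 : HasDerivAt (fun d : ℝ => -(d - dhat) ^ 2) (-(2 * (x - dhat))) x := by
      have := (((hasDerivAt_id x).sub_const dhat).fun_pow 2).fun_neg
      simpa using this
    have := h1.mul (hlog x hx)
    refine this.congr_deriv ?_
    simp only [hg1def]
    field_simp
    ring
  have hg1' : ∀ x : ℝ, 0 < x → HasDerivAt g1 (g2 x) x := by
    intro x hx
    have h1 : HasDerivAt (fun d : ℝ => -2 * (d - dhat)) (-2) x := by
      simpa using ((hasDerivAt_id x).sub_const dhat).const_mul (-2)
    have h2 := h1.mul (hlog x hx)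
    have h3 : HasDerivAt (fun d : ℝ => (d - dhat) ^ 2) (2 * (x - dhat)) x := by
      simpa using (((hasDerivAt_id x).sub_const dhat).fun_pow 2)
    have h4 : HasDerivAt (fun d : ℝ => (d - dhat) ^ 2 / d)
        ((2 * (x - dhat) * x - (x - dhat) ^ 2 * 1) / x ^ 2) x :=
      h3.div (hasDerivAt_id x) (ne_of_gt hx)
    have := h2.sub h4
    refine this.congr_deriv ?_
    simp only [hg2def]
    field_simp
    ring
  -- values at dhat
  have hg1dhat : g1 dhat = 0 := by simp [hg1def]
  have hg2dhat : g2 dhat = 0 := by simp [hg2def, div_self hdhat.ne']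
  have hIoc : Set.Ioc (0:ℝ) dhat ∈ nhdsWithin dhat (Set.Iic dhat) := by
    rw [mem_nhdsWithin]
    exact ⟨Set.Ioi 0, isOpen_Ioi, hdhat, fun y hy => ⟨hy.1, hy.2⟩⟩
  -- b has derivative B1 everywhere on Ioi 0
  have hbB1 : ∀ x ∈ Set.Ioi (0:ℝ), HasDerivAt b (B1 x) x := by
    intro x hx
    simp only [Set.mem_Ioi] at hx
    rcases lt_trichotomy x dhat with hlt | heq | hgt
    · have heq : b =ᶠ[nhds x] fun d => -(d - dhat) ^ 2 * Real.log (d / dhat) := by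
        filter_upwards [isOpen_Ioo.mem_nhds (⟨hx, hlt⟩ : x ∈ Set.Ioo 0 dhat)] with y hy
        exact hb₁ y hy.1 hy.2
      have := (hg x hx).congr_of_eventuallyEq heq
      simpa [hB1def, hlt] using this
    · rw [heq]
      have hleft : HasDerivWithinAt b 0 (Set.Iic dhat) dhat := by
        have h1 : HasDerivWithinAt (fun d => -(d - dhat) ^ 2 * Real.log (d / dhat)) 0
            (Set.Ioc 0 dhat) dhat := by
          have := (hg dhat hdhat).hasDerivWithinAt (s := Set.Ioc 0 dhat)
          rwa [hg1dhat] at this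
        have h2 : HasDerivWithinAt b 0 (Set.Ioc 0 dhat) dhat := by
          refine h1.congr (fun y hy => ?_) ?_
          · rcases eq_or_lt_of_le hy.2 with h | h
            · subst h; simp [hb₂ y le_rfl]
            · exact hb₁ y hy.1 h
          · simp [hb₂ dhat le_rfl]
        exact h2.mono_of_mem_nhdsWithin hIoc
      have hright : HasDerivWithinAt b 0 (Set.Ici dhat) dhat := by
        refine (hasDerivWithinAt_const dhat _ (0:ℝ)).congr (fun y hy => hb₂ y hy)
          (hb₂ dhat le_rfl)
      have := hleft.union hright
      rw [Set.Iic_union_Ici] at this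
      rw [hasDerivWithinAt_univ] at this
      simpa [hB1def] using this
    · have heq : b =ᶠ[nhds x] fun _ => (0:ℝ) := by
        filter_upwards [isOpen_Ioi.mem_nhds (hgt : x ∈ Set.Ioi dhat)] with y hy
        exact hb₂ y (le_of_lt hy)
      have := (hasDerivAt_const x (0:ℝ)).congr_of_eventuallyEq heq
      simpa [hB1def, not_lt.2 hgt.le] using this
  -- B1 has derivative B2 everywhere on Ioi 0
  have hB1B2 : ∀ x ∈ Set.Ioi (0:ℝ), HasDerivAt B1 (B2 x) x := by
    intro x hx
    simp only [Set.mem_Ioi] at hx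
    rcases lt_trichotomy x dhat with hlt | heq | hgt
    · have heq : B1 =ᶠ[nhds x] g1 := by
        filter_upwards [isOpen_Iio.mem_nhds (hlt : x ∈ Set.Iio dhat)] with y hy
        simp [hB1def, show y < dhat from hy]
      have := (hg1' x hx).congr_of_eventuallyEq heq
      simpa [hB2def, hlt] using this
    · rw [heq]
      have hleft : HasDerivWithinAt B1 0 (Set.Iic dhat) dhat := by
        have h1 : HasDerivWithinAt g1 0 (Set.Ioc 0 dhat) dhat := by
          have := (hg1' dhat hdhat).hasDerivWithinAt (s := Set.Ioc 0 dhat)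
          rwa [hg2dhat] at this
        have h2 : HasDerivWithinAt B1 0 (Set.Ioc 0 dhat) dhat := by
          refine h1.congr (fun y hy => ?_) ?_
          · rcases eq_or_lt_of_le hy.2 with h | h
            · subst h; simp [hB1def, hg1dhat]
            · simp [hB1def, h]
          · simp [hB1def, hg1dhat]
        exact h2.mono_of_mem_nhdsWithin hIoc
      have hright : HasDerivWithinAt B1 0 (Set.Ici dhat) dhat := by
        refine (hasDerivWithinAt_const dhat _ (0:ℝ)).congr (fun y hy => ?_) ?_
        · simp [hB1def, not_lt.2 (show dhat ≤ y from hy)]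
        · simp [hB1def]
      have := hleft.union hright
      rw [Set.Iic_union_Ici] at this
      rw [hasDerivWithinAt_univ] at this
      simpa [hB2def] using this
    · have heq : B1 =ᶠ[nhds x] fun _ => (0:ℝ) := by
        filter_upwards [isOpen_Ioi.mem_nhds (hgt : x ∈ Set.Ioi dhat)] with y hy
        simp [hB1def, not_lt.2 (le_of_lt (show dhat < y from hy))]
      have := (hasDerivAt_const x (0:ℝ)).congr_of_eventuallyEq heq
      simpa [hB2def, not_lt.2 hgt.le] using this
  -- B2 is continuous on Ioi 0
  have hB2cont : ContinuousOn B2 (Set.Ioi (0:ℝ)) := by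
    intro x hx
    simp only [Set.mem_Ioi] at hx
    apply ContinuousAt.continuousWithinAt
    rcases lt_trichotomy x dhat with hlt | heq | hgt
    · have hg2c : ContinuousAt g2 x := by
        have h1 : ContinuousAt (fun d : ℝ => Real.log (d / dhat)) x :=
          (Real.continuousAt_log (by positivity)).comp (continuousAt_id.div_const dhat)
        exact ((h1.const_mul _).sub ((continuousAt_const.mul
          (continuousAt_id.sub continuousAt_const)).div continuousAt_id hx.ne')).add
          (((continuousAt_id.sub continuousAt_const).pow 2).div (continuousAt_id.pow 2)
            (by positivity))
      have heq : B2 =ᶠ[nhds x] g2 := by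
        filter_upwards [isOpen_Iio.mem_nhds (hlt : x ∈ Set.Iio dhat)] with y hy
        simp [hB2def, show y < dhat from hy]
      exact (continuousAt_congr heq).mpr hg2c
    · rw [heq]
      have hg2c : ContinuousAt g2 dhat := by
        have h1 : ContinuousAt (fun d : ℝ => Real.log (d / dhat)) dhat :=
          (Real.continuousAt_log (by positivity)).comp (continuousAt_id.div_const dhat)
        exact ((h1.const_mul _).sub ((continuousAt_const.mul
          (continuousAt_id.sub continuousAt_const)).div continuousAt_id hdhat.ne')).add
          (((continuousAt_id.sub continuousAt_const).pow 2).div (continuousAt_id.pow 2)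
            (by positivity))
      have hleft : ContinuousWithinAt B2 (Set.Iic dhat) dhat := by
        refine (hg2c.continuousWithinAt (s := Set.Iic dhat)).congr (fun y hy => ?_) ?_
        · by_cases h : y < dhat
          · simp [hB2def, h]
          · have : y = dhat := le_antisymm hy (not_lt.1 h)
            subst this
            simp [hB2def, hg2dhat]
        · simp [hB2def, hg2dhat]
      have hright : ContinuousWithinAt B2 (Set.Ici dhat) dhat := by
        refine (continuousWithinAt_const (b := (0:ℝ))).congr (fun y hy => ?_) ?_
        · simp [hB2def, not_lt.2 (show dhat ≤ y from hy)]
        · simp [hB2def]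
      have := hleft.union hright
      rw [Set.Iic_union_Ici] at this
      rwa [continuousWithinAt_univ] at this
    · have heq : B2 =ᶠ[nhds x] fun _ => (0:ℝ) := by
        filter_upwards [isOpen_Ioi.mem_nhds (hgt : x ∈ Set.Ioi dhat)] with y hy
        simp [hB2def, not_lt.2 (le_of_lt (show dhat < y from hy))]
      exact (continuousAt_congr heq).mpr continuousAt_const
  -- assemble
  rw [show (2 : WithTop ℕ∞) = 1 + 1 by norm_num,
    contDiffOn_succ_iff_deriv_of_isOpen isOpen_Ioi]
  refine ⟨fun x hx => (hbB1 x hx).differentiableAt.differentiableWithinAt, by simp, ?_⟩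
  have hd1 : Set.EqOn (deriv b) B1 (Set.Ioi (0:ℝ)) := fun x hx => (hbB1 x hx).deriv
  refine ContDiffOn.congr ?_ hd1
  rw [show (1 : WithTop ℕ∞) = 0 + 1 by norm_num,
    contDiffOn_succ_iff_deriv_of_isOpen isOpen_Ioi]
  refine ⟨fun x hx => (hB1B2 x hx).differentiableAt.differentiableWithinAt, by simp, ?_⟩
  have hd2 : Set.EqOn (deriv B1) B2 (Set.Ioi (0:ℝ)) := fun x hx => (hB1B2 x hx).deriv
  rw [contDiffOn_zero]
  exact hB2cont.congr hd2
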